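/- Let C and D = y_1 … y_n be reflexive digraph cycles with D non-contractible, let i be a vertex of D with σ^i(D) ≤* C, and let Φ_i^M be the maximum element of Mon_1(C,D;i) (the monotone wind-1 map whose selection function finds the left-most copy of σ^i(D) as a *-substring of C). Then there is a monotone one-step up edge from Φ_i^M to some map in Mon_1(C,D;i+1) if and only if the string σ^i(D)y_{i+1}, obtained from σ^i(D) by appending its first letter, is a *-substring of C. -/
import Mathlib


open scoped Classical

namespace Recon

/-- Orientation letters for edges of a digraph cycle: `+`, `-`, `*`. -/
inductive Orient : Type
  | plus
  | minus
  | star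
deriving DecidableEq

/-- A forward arc is allowed along an edge with this orientation letter. -/
def Orient.fwd : Orient → Prop
  | Orient.plus => True
  | Orient.minus => False
  | Orient.star => True

/-- A backward arc is allowed along an edge with this orientation letter. -/
def Orient.bwd : Orient → Prop
  | Orient.plus => False
  | Orient.minus => True
  | Orient.star => True

/-- The arc relation of the reflexive digraph cycle on `ZMod m` whose orientation
string is `f`, where `f c` is the orientation of the edge from `c` to `c + 1`. -/
def cycRel {m : ℕ} (f : ZMod m → Orient) (u v : ZMod m) : Prop :=
  u = v ∨ (v = u + 1 ∧ (f u).fwd) ∨ (u = v + 1 ∧ (f v).bwd)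

/-- `φ` is a digraph homomorphism. -/
def IsHom {α β : Type*} (rG : α → α → Prop) (rH : β → β → Prop) (φ : α → β) : Prop :=
  ∀ u v, rG u v → rH (φ u) (φ v)

/-- The arc relation of the Hom-graph `Hom(G,H)`. -/
def HomArc {α β : Type*} (rG : α → α → Prop) (rH : β → β → Prop) (φ ψ : α → β) : Prop :=
  ∀ u v, rG u v → rH (φ u) (ψ v)

/-- `φψ` is an edge of the Hom-graph. -/
def HomEdge {α β : Type*} (rG : α → α → Prop) (rH : β → β → Prop) (φ ψ : α → β) : Prop :=
  HomArc rG rH φ ψ ∨ HomArc rG rH ψ φ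

/-- The contribution of the edge `c (c+1)` of `C` to the increase of `φ`:
`1` if increasing, `-1` if decreasing, `0` if stationary. -/
def edgeVal {m n : ℕ} (φ : ZMod m → ZMod n) (c : ZMod m) : ℤ :=
  if φ (c + 1) = φ c + 1 then 1 else if φ (c + 1) = φ c - 1 then -1 else 0

/-- The increase of a map between cycles: #increasing − #decreasing edges. -/
def increase {m n : ℕ} (φ : ZMod m → ZMod n) : ℤ :=
  ∑ j ∈ Finset.range m, edgeVal φ ((j : ℕ) : ZMod m)

/-- The increase of the subpath `c_a … c_{a+L}`. -/
def partialInc {m n : ℕ} (φ : ZMod m → ZMod n) (a : ZMod m) (L : ℕ) : ℤ :=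
  ∑ j ∈ Finset.range L, edgeVal φ (a + ((j : ℕ) : ZMod m))

/-- `φ` has wind `w`, i.e. its increase is `w * n`. -/
def HasWind {m n : ℕ} (φ : ZMod m → ZMod n) (w : ℤ) : Prop :=
  increase φ = w * (n : ℤ)

/-- A reflexive digraph cycle is non-contractible if it has length at least 4
or is a directed 3-cycle. -/
def NonContractible {n : ℕ} (f : ZMod n → Orient) : Prop :=
  4 ≤ n ∨ (n = 3 ∧ ((∀ i, f i = Orient.plus) ∨ (∀ i, f i = Orient.minus)))

/-- `φ` is increasing: every edge increasing or stationary, not all stationary. -/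
def IncMap {m n : ℕ} (φ : ZMod m → ZMod n) : Prop :=
  (∀ c, φ (c + 1) = φ c + 1 ∨ φ (c + 1) = φ c) ∧ ∃ c, φ (c + 1) = φ c + 1

/-- `φ` is decreasing: every edge decreasing. -/
def DecMap {m n : ℕ} (φ : ZMod m → ZMod n) : Prop :=
  ∀ c, φ (c + 1) = φ c - 1

/-- `φ` is monotone: increasing or decreasing. -/
def MonMap {m n : ℕ} (φ : ZMod m → ZMod n) : Prop :=
  IncMap φ ∨ DecMap φ

/-- `φ` is monotone in the weak sense where constant maps also count. -/
def MonOrConst {m n : ℕ} (φ : ZMod m → ZMod n) : Prop :=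
  (∀ c, φ (c + 1) = φ c + 1 ∨ φ (c + 1) = φ c) ∨ DecMap φ

/-- `Y ≤* X`: `Y` is a `*`-substring of `X`, via a strictly increasing selection
function `α` with `Y i = X (α i)` unless `Y i = *`. -/
def StarSub {p q : ℕ} (Y : Fin p → Orient) (X : Fin q → Orient) : Prop :=
  ∃ α : Fin p → Fin q, StrictMono α ∧ ∀ i, Y i = X (α i) ∨ Y i = Orient.star

/-- The orientation string of the (pointed) cycle `f`. -/
def cycStr {m : ℕ} (f : ZMod m → Orient) : Fin m → Orient :=
  fun j => f ((j : ℕ) : ZMod m)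

/-- The orientation string `σ^i(Y^k)` = `(σ^i Y)^k`: the `i`-th shift of the
`k`-fold concatenation of the string of the cycle `fY`. -/
def shiftPowStr {s : ℕ} (fY : ZMod s → Orient) (k : ℕ) (i : ZMod s) :
    Fin (k * s) → Orient :=
  fun j => fY (i + ((j : ℕ) : ZMod s))

/-- The orientation string `σ^i(Y)^k y_{i+1}` : the `i`-th shift of the `k`-fold
concatenation of the string of `fY`, extended by its own first letter. -/
def shiftPowExtStr {s : ℕ} (fY : ZMod s → Orient) (k : ℕ) (i : ZMod s) :
    Fin (k * s + 1) → Orient :=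
  fun j => fY (i + ((j : ℕ) : ZMod s))

/-- Every vertex that moves from `φ` to `ψ`, moves up. -/
def MovesUpOnly {m n : ℕ} (φ ψ : ZMod m → ZMod n) : Prop :=
  ∀ c, ψ c = φ c ∨ ψ c = φ c + 1

/-- Every vertex that moves from `φ` to `ψ`, moves down. -/
def MovesDownOnly {m n : ℕ} (φ ψ : ZMod m → ZMod n) : Prop :=
  ∀ c, ψ c = φ c ∨ ψ c = φ c - 1

/-- `φψ` is an up edge of the Hom-graph. -/
def UpEdge {m n : ℕ} (rC : ZMod m → ZMod m → Prop) (rD : ZMod n → ZMod n → Prop)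
    (φ ψ : ZMod m → ZMod n) : Prop :=
  HomEdge rC rD φ ψ ∧ MovesUpOnly φ ψ

/-- `φ` and `ψ` are joined by a path (walk) inside the induced subgraph on `S`. -/
def ConnIn {m n : ℕ} (rC : ZMod m → ZMod m → Prop) (rD : ZMod n → ZMod n → Prop)
    (S : Set (ZMod m → ZMod n)) (φ ψ : ZMod m → ZMod n) : Prop :=
  Relation.ReflTransGen (fun a b => a ∈ S ∧ b ∈ S ∧ HomEdge rC rD a b) φ ψ

/-- `ψ` is reachable from `φ` by a path of up edges inside `S`. -/
def UpReachIn {m n : ℕ} (rC : ZMod m → ZMod m → Prop) (rD : ZMod n → ZMod n → Prop)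
    (S : Set (ZMod m → ZMod n)) (φ ψ : ZMod m → ZMod n) : Prop :=
  Relation.ReflTransGen (fun a b => a ∈ S ∧ b ∈ S ∧ UpEdge rC rD a b) φ ψ

/-- One step of a path of up edges between homomorphisms. -/
def UpStep {m n : ℕ} (rC : ZMod m → ZMod m → Prop) (rD : ZMod n → ZMod n → Prop)
    (φ ψ : ZMod m → ZMod n) : Prop :=
  IsHom rC rD φ ∧ IsHom rC rD ψ ∧ UpEdge rC rD φ ψ

/-- The set of vertices on which `φ` and `φ'` differ. -/
def Neq {α β : Type*} (φ φ' : α → β) : Set α := {g | φ g ≠ φ' g}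

/-- The map `φ_T`, agreeing with `φ'` on `T` and with `φ` elsewhere. -/
noncomputable def refineMap {α β : Type*} (φ φ' : α → β) (T : Set α) : α → β :=
  fun g => if g ∈ T then φ' g else φ g

/-- The edge `φφ'` is non-refinable: no nonempty proper subset `T` of `Neq φ φ'`
yields a homomorphism `φ_T`. -/
def NonRefinable {α β : Type*} (rG : α → α → Prop) (rH : β → β → Prop)
    (φ φ' : α → β) : Prop :=
  ¬ ∃ T : Set α, T.Nonempty ∧ T ⊂ Neq φ φ' ∧ IsHom rG rH (refineMap φ φ' T)

/-- `T` is a strong component of the digraph `r`. -/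
def IsStrongComponent {α : Type*} (r : α → α → Prop) (T : Set α) : Prop :=
  T.Nonempty ∧ (∀ u ∈ T, ∀ v ∈ T, Relation.ReflTransGen r u v) ∧
    ∀ T' : Set α, T ⊆ T' → (∀ u ∈ T', ∀ v ∈ T', Relation.ReflTransGen r u v) → T' = T

/-- `T` has no arcs out to vertices not in `T`. -/
def IsTerminal {α : Type*} (r : α → α → Prop) (T : Set α) : Prop :=
  ∀ u ∈ T, ∀ v, r u v → v ∈ T

/-- `Mon_1(C,D;i)`: monotone wind-1 homomorphisms `φ` with `φ c₀ = i`. -/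
def Mon1 {m n : ℕ} (fC : ZMod m → Orient) (fD : ZMod n → Orient) (i : ZMod n) :
    Set (ZMod m → ZMod n) :=
  {φ | IsHom (cycRel fC) (cycRel fD) φ ∧ MonMap φ ∧ increase φ = (n : ℤ) ∧ φ 0 = i}

/-- A one-step up edge: an edge from `φ` obtained by moving all the vertices of a
subpath of `C` mapped to a single vertex `d` up to `d + 1`. -/
def OneStepUp {m n : ℕ} (rC : ZMod m → ZMod m → Prop) (rD : ZMod n → ZMod n → Prop)
    (φ φ' : ZMod m → ZMod n) : Prop :=
  HomEdge rC rD φ φ' ∧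
    ∃ (a : ZMod m) (k : ℕ) (d : ZMod n), k < m ∧
      (∀ j : ℕ, j ≤ k → φ (a + ((j : ℕ) : ZMod m)) = d) ∧
      ∀ c, φ' c = if ∃ j : ℕ, j ≤ k ∧ c = a + ((j : ℕ) : ZMod m) then d + 1 else φ c

/-- The number of increasing edges of `φ` among the first `j` edges of `C`. -/
def incBefore {m n : ℕ} (φ : ZMod m → ZMod n) (j : ℕ) : ℕ :=
  ((Finset.range j).filter fun t =>
    φ (((t : ℕ) : ZMod m) + 1) = φ ((t : ℕ) : ZMod m) + 1).card

/-- One cutback-pushing step: `φ'` is obtained from `φ` by replacing the values of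
`φ` on a cutback `c_a … c_{a+L}` by `φ a`. -/
def CutbackStep {m n : ℕ} (φ φ' : ZMod m → ZMod n) : Prop :=
  ∃ (a : ZMod m) (L : ℕ), L < m ∧ partialInc φ a L = 0 ∧
    (∀ j : ℕ, 0 < j → j < L → partialInc φ a j < 0) ∧
    ∀ c, φ' c = if ∃ j : ℕ, j ≤ L ∧ c = a + ((j : ℕ) : ZMod m) then φ a else φ c

/-- `Mon_1^+(C,D;i)`: wind-1 homomorphisms whose monotone push-up is in `Mon_1(C,D;i)`. -/
def Mon1Plus {m n : ℕ} (fC : ZMod m → Orient) (fD : ZMod n → Orient) (i : ZMod n) :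
    Set (ZMod m → ZMod n) :=
  {φ | IsHom (cycRel fC) (cycRel fD) φ ∧ increase φ = (n : ℤ) ∧
    ∃ ψ ∈ Mon1 fC fD i, Relation.ReflTransGen CutbackStep φ ψ}

section Aux

variable {m n : ℕ}

lemma zmod_cast_eq_iff {a b : ℕ} (ha : a < n) (hb : b < n) :
    ((a : ZMod n) = (b : ZMod n)) ↔ a = b := by
  constructor
  · intro h
    have := congrArg ZMod.val h
    rwa [ZMod.val_cast_of_lt ha, ZMod.val_cast_of_lt hb] at this
  · rintro rfl; rfl

lemma add_one_ne (hn : 3 ≤ n) (x : ZMod n) : x + 1 ≠ x := by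
  intro h
  have h1 : (1 : ZMod n) = 0 := add_eq_left.mp h
  rw [show (1 : ZMod n) = ((1 : ℕ) : ZMod n) by norm_cast,
      show (0 : ZMod n) = ((0 : ℕ) : ZMod n) by norm_cast] at h1
  have := (zmod_cast_eq_iff (by omega) (by omega)).mp h1
  omega

lemma add_two_ne (hn : 3 ≤ n) (x : ZMod n) : x + 1 + 1 ≠ x := by
  intro h
  rw [add_assoc] at h
  have h1 : (1 + 1 : ZMod n) = 0 := add_eq_left.mp h
  rw [show (1 + 1 : ZMod n) = ((2 : ℕ) : ZMod n) by norm_cast,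
      show (0 : ZMod n) = ((0 : ℕ) : ZMod n) by norm_cast] at h1
  have := (zmod_cast_eq_iff (by omega) (by omega)).mp h1
  omega

lemma ne_sub_one (hn : 3 ≤ n) (x : ZMod n) : x ≠ x - 1 := by
  intro h
  apply add_one_ne hn (x - 1)
  calc x - 1 + 1 = x := by ring
    _ = x - 1 := h

lemma sub_one_ne_add_one (hn : 3 ≤ n) (x : ZMod n) : x - 1 ≠ x + 1 := by
  intro h
  exact add_two_ne hn x (by rw [← h]; ring)

lemma zmod_cast_val [NeZero m] (c : ZMod m) : ((c.val : ℕ) : ZMod m) = c :=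
  ZMod.natCast_rightInverse c

lemma incBefore_succ (φ : ZMod m → ZMod n) (j : ℕ) :
    incBefore φ (j + 1) = incBefore φ j +
      if φ (((j : ℕ) : ZMod m) + 1) = φ ((j : ℕ) : ZMod m) + 1 then 1 else 0 := by
  unfold incBefore
  rw [Finset.range_add_one, Finset.filter_insert]
  by_cases h : φ (((j : ℕ) : ZMod m) + 1) = φ ((j : ℕ) : ZMod m) + 1
  · rw [if_pos h, if_pos h, Finset.card_insert_of_notMem (by simp)]
  · rw [if_neg h, if_neg h, add_zero]

lemma phi_cast (hn : 3 ≤ n) (φ : ZMod m → ZMod n)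
    (hstep : ∀ c, φ (c + 1) = φ c + 1 ∨ φ (c + 1) = φ c) (j : ℕ) :
    φ ((j : ℕ) : ZMod m) = φ 0 + ((incBefore φ j : ℕ) : ZMod n) := by
  induction j with
  | zero => simp [incBefore]
  | succ j ih =>
    have hcast : ((j + 1 : ℕ) : ZMod m) = ((j : ℕ) : ZMod m) + 1 := by push_cast; ring
    rw [hcast, incBefore_succ]
    rcases hstep ((j : ℕ) : ZMod m) with h | h
    · rw [if_pos h, h, ih]; push_cast; ring
    · have hne : ¬ (φ (((j : ℕ) : ZMod m) + 1) = φ ((j : ℕ) : ZMod m) + 1) := by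
        rw [h]; intro h2; exact add_one_ne hn _ h2.symm
      rw [if_neg hne, add_zero, h, ih]

lemma increase_eq (hn : 3 ≤ n) (φ : ZMod m → ZMod n)
    (hstep : ∀ c, φ (c + 1) = φ c + 1 ∨ φ (c + 1) = φ c) :
    increase φ = ((incBefore φ m : ℕ) : ℤ) := by
  unfold increase incBefore
  rw [← Finset.sum_boole]
  apply Finset.sum_congr rfl
  intro j _
  rcases hstep ((j : ℕ) : ZMod m) with h | h
  · rw [edgeVal, if_pos h, if_pos h]
  · have h1 : ¬ (φ (((j : ℕ) : ZMod m) + 1) = φ ((j : ℕ) : ZMod m) + 1) := by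
      rw [h]; intro h2; exact add_one_ne hn _ h2.symm
    have h2 : ¬ (φ (((j : ℕ) : ZMod m) + 1) = φ ((j : ℕ) : ZMod m) - 1) := by
      rw [h]; exact ne_sub_one hn _
    rw [edgeVal, if_neg h1, if_neg h2, if_neg h1]

lemma incMap_of (hm : 3 ≤ m) (hn : 3 ≤ n) (φ : ZMod m → ZMod n)
    (hmon : MonMap φ) (hinc : increase φ = (n : ℤ)) : IncMap φ := by
  rcases hmon with h | h
  · exact h
  · exfalso
    have : increase φ = -(m : ℤ) := by
      unfold increase
      have : ∀ j ∈ Finset.range m, edgeVal φ ((j : ℕ) : ZMod m) = -1 := by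
        intro j _
        have hd := h ((j : ℕ) : ZMod m)
        have h1 : ¬ (φ (((j : ℕ) : ZMod m) + 1) = φ ((j : ℕ) : ZMod m) + 1) := by
          rw [hd]; exact sub_one_ne_add_one hn _
        rw [edgeVal, if_neg h1, if_pos hd]
      rw [Finset.sum_congr rfl this]
      simp
    rw [hinc] at this
    omega

lemma hom_match {fC : ZMod m → Orient} {fD : ZMod n → Orient} (hn : 3 ≤ n)
    {φ : ZMod m → ZMod n} (hhom : IsHom (cycRel fC) (cycRel fD) φ)
    {c : ZMod m} (hinc : φ (c + 1) = φ c + 1) :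
    fD (φ c) = fC c ∨ fD (φ c) = Orient.star := by
  have hfwd : (fC c).fwd → (fD (φ c)).fwd := by
    intro hf
    have := hhom c (c + 1) (Or.inr (Or.inl ⟨rfl, hf⟩))
    rw [hinc] at this
    rcases this with h | ⟨_, h⟩ | ⟨h, _⟩
    · exact absurd h.symm (add_one_ne hn _)
    · exact h
    · exact absurd h.symm (add_two_ne hn _)
  have hbwd : (fC c).bwd → (fD (φ c)).bwd := by
    intro hf
    have := hhom (c + 1) c (Or.inr (Or.inr ⟨rfl, hf⟩))
    rw [hinc] at this
    rcases this with h | ⟨h, _⟩ | ⟨_, h⟩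
    · exact absurd h (add_one_ne hn _)
    · exact absurd h.symm (add_two_ne hn _)
    · exact h
  cases hC : fC c with
  | plus =>
    have := hfwd (by rw [hC]; trivial)
    cases hD' : fD (φ c) with
    | plus => exact Or.inl rfl
    | minus => rw [hD'] at this; exact absurd this id
    | star => exact Or.inr rfl
  | minus =>
    have := hbwd (by rw [hC]; trivial)
    cases hD' : fD (φ c) with
    | plus => rw [hD'] at this; exact absurd this id
    | minus => exact Or.inl rfl
    | star => exact Or.inr rfl
  | star =>
    have h1 := hfwd (by rw [hC]; trivial)
    have h2 := hbwd (by rw [hC]; trivial)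
    cases hD' : fD (φ c) with
    | plus => rw [hD'] at h2; exact absurd h2 id
    | minus => rw [hD'] at h1; exact absurd h1 id
    | star => exact Or.inr rfl

lemma hom_of_matches {fC : ZMod m → Orient} {fD : ZMod n → Orient}
    {φ : ZMod m → ZMod n}
    (hstep : ∀ c, φ (c + 1) = φ c + 1 ∨ φ (c + 1) = φ c)
    (hmatch : ∀ c, φ (c + 1) = φ c + 1 → fD (φ c) = fC c ∨ fD (φ c) = Orient.star) :
    IsHom (cycRel fC) (cycRel fD) φ := by
  rintro u v (rfl | ⟨rfl, hf⟩ | ⟨rfl, hf⟩)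
  · exact Or.inl rfl
  · rcases hstep u with h | h
    · refine Or.inr (Or.inl ⟨h, ?_⟩)
      rcases hmatch u h with hm' | hm'
      · rw [hm']; exact hf
      · rw [hm']; trivial
    · exact Or.inl h.symm
  · rcases hstep v with h | h
    · refine Or.inr (Or.inr ⟨h, ?_⟩)
      rcases hmatch v h with hm' | hm'
      · rw [hm']; exact hf
      · rw [hm']; trivial
    · exact Or.inl h

lemma count_filter_lt_image {g : ℕ → ℕ} {k t : ℕ}
    (hg : ∀ t1 t2, t1 < t2 → t2 < k → g t1 < g t2) (ht : t < k) :
    (((Finset.range k).image g).filter (· < g t)).card = t := by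
  have himg : ((Finset.range k).image g).filter (· < g t) = (Finset.range t).image g := by
    ext x
    simp only [Finset.mem_filter, Finset.mem_image, Finset.mem_range]
    constructor
    · rintro ⟨⟨t', ht', rfl⟩, hlt⟩
      refine ⟨t', ?_, rfl⟩
      by_contra hc
      push_neg at hc
      rcases eq_or_lt_of_le hc with rfl | h2
      · exact lt_irrefl _ hlt
      · exact absurd (hg t t' h2 ht') (by omega)
    · rintro ⟨t', ht', rfl⟩
      exact ⟨⟨t', by omega, rfl⟩, hg t' t ht' ht⟩
  rw [himg, Finset.card_image_of_injOn, Finset.card_range]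
  intro t1 h1 t2 h2 he
  simp only [Finset.coe_range, Set.mem_Iio] at h1 h2
  by_contra hne
  rcases Nat.lt_or_ge t1 t2 with h | h
  · exact absurd (hg t1 t2 h (by omega)) (by omega)
  · rcases eq_or_lt_of_le h with h' | h'
    · exact hne h'.symm
    · exact absurd (hg t2 t1 h' (by omega)) (by omega)

lemma incBefore_eq_of_char {φ : ZMod m → ZMod n} {T : Finset ℕ}
    (h : ∀ j, j < m → (φ (((j : ℕ) : ZMod m) + 1) = φ ((j : ℕ) : ZMod m) + 1 ↔ j ∈ T))
    {j : ℕ} (hj : j ≤ m) : incBefore φ j = (T.filter (· < j)).card := by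
  unfold incBefore
  congr 1
  ext t
  simp only [Finset.mem_filter, Finset.mem_range]
  constructor
  · rintro ⟨h1, h2⟩
    exact ⟨(h t (by omega)).mp h2, h1⟩
  · rintro ⟨h1, h2⟩
    exact ⟨h2, (h t (by omega)).mpr h1⟩

noncomputable def cMap {m n : ℕ} (i0 : ZMod n) (T : Finset ℕ) : ZMod m → ZMod n :=
  fun c => i0 + (((T.filter (· < c.val)).card : ℕ) : ZMod n)

lemma filter_lt_succ (T : Finset ℕ) (v : ℕ) :
    T.filter (· < v + 1) = if v ∈ T then insert v (T.filter (· < v)) else T.filter (· < v) := by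
  by_cases h : v ∈ T
  · rw [if_pos h]
    ext x
    simp only [Finset.mem_filter, Finset.mem_insert]
    constructor
    · rintro ⟨hx, hlt⟩
      rcases Nat.lt_or_ge x v with h' | h'
      · exact Or.inr ⟨hx, h'⟩
      · exact Or.inl (by omega)
    · rintro (rfl | ⟨hx, hlt⟩)
      · exact ⟨h, by omega⟩
      · exact ⟨hx, by omega⟩
  · rw [if_neg h]
    ext x
    simp only [Finset.mem_filter]
    constructor
    · rintro ⟨hx, hlt⟩
      refine ⟨hx, ?_⟩
      rcases Nat.lt_or_ge x v with h' | h'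
      · exact h'
      · exfalso; have : x = v := by omega
        exact h (this ▸ hx)
    · rintro ⟨hx, hlt⟩
      exact ⟨hx, by omega⟩

lemma cMap_zero [NeZero m] (i0 : ZMod n) (T : Finset ℕ) : cMap i0 T (0 : ZMod m) = i0 := by
  unfold cMap
  rw [ZMod.val_zero]
  have : T.filter (· < 0) = ∅ := by
    ext x; simp
  rw [this]
  simp

lemma cMap_cast [NeZero m] (i0 : ZMod n) (T : Finset ℕ) {j : ℕ} (hj : j < m) :
    cMap i0 T ((j : ℕ) : ZMod m) = i0 + (((T.filter (· < j)).card : ℕ) : ZMod n) := by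
  unfold cMap
  rw [ZMod.val_cast_of_lt hj]

lemma cMap_succ [NeZero m] (hn : 3 ≤ n) {T : Finset ℕ} (hT : ∀ x ∈ T, x < m)
    (hTc : T.card = n) (i0 : ZMod n) (c : ZMod m) :
    cMap i0 T (c + 1) = if c.val ∈ T then cMap i0 T c + 1 else cMap i0 T c := by
  have hv := ZMod.val_lt c
  have hc1 : ((c.val + 1 : ℕ) : ZMod m) = c + 1 := by push_cast [zmod_cast_val]; rfl
  by_cases hvm : c.val + 1 = m
  · have h0 : c + 1 = 0 := by rw [← hc1, hvm, ZMod.natCast_self]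
    rw [h0, cMap_zero]
    by_cases hmem : c.val ∈ T
    · rw [if_pos hmem]
      have hTf : T.filter (· < c.val) = T.erase c.val := by
        ext x
        simp only [Finset.mem_filter, Finset.mem_erase]
        constructor
        · rintro ⟨hx, hlt⟩; exact ⟨by omega, hx⟩
        · rintro ⟨hne, hx⟩; have := hT x hx; exact ⟨hx, by omega⟩
      unfold cMap
      rw [hTf, Finset.card_erase_of_mem hmem, hTc]
      have h1 : ((n - 1 : ℕ) : ZMod n) + 1 = ((n : ℕ) : ZMod n) := by
        rw [show ((n - 1 : ℕ) : ZMod n) + 1 = ((n - 1 + 1 : ℕ) : ZMod n) by push_cast; ring,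
          (by omega : n - 1 + 1 = n)]
      rw [add_assoc, h1, ZMod.natCast_self, add_zero]
    · rw [if_neg hmem]
      have hTf : T.filter (· < c.val) = T := by
        ext x
        simp only [Finset.mem_filter]
        constructor
        · rintro ⟨hx, _⟩; exact hx
        · intro hx
          have := hT x hx
          have hne : x ≠ c.val := fun h => hmem (h ▸ hx)
          exact ⟨hx, by omega⟩
      unfold cMap
      rw [hTf, hTc, ZMod.natCast_self, add_zero]
  · have hlt : c.val + 1 < m := by omega
    have hval : (c + 1).val = c.val + 1 := by rw [← hc1, ZMod.val_cast_of_lt hlt]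
    unfold cMap
    rw [hval, filter_lt_succ]
    by_cases hmem : c.val ∈ T
    · rw [if_pos hmem, if_pos hmem,
        Finset.card_insert_of_notMem (by simp)]
      push_cast; ring
    · rw [if_neg hmem, if_neg hmem]

lemma cMap_step [NeZero m] (hn : 3 ≤ n) {T : Finset ℕ} (hT : ∀ x ∈ T, x < m)
    (hTc : T.card = n) (i0 : ZMod n) (c : ZMod m) :
    cMap i0 T (c + 1) = cMap i0 T c + 1 ∨ cMap i0 T (c + 1) = cMap i0 T c := by
  rw [cMap_succ hn hT hTc]
  by_cases hmem : c.val ∈ T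
  · rw [if_pos hmem]; exact Or.inl rfl
  · rw [if_neg hmem]; exact Or.inr rfl

lemma cMap_inc_iff [NeZero m] (hn : 3 ≤ n) {T : Finset ℕ} (hT : ∀ x ∈ T, x < m)
    (hTc : T.card = n) (i0 : ZMod n) (c : ZMod m) :
    cMap i0 T (c + 1) = cMap i0 T c + 1 ↔ c.val ∈ T := by
  rw [cMap_succ hn hT hTc]
  by_cases hmem : c.val ∈ T
  · rw [if_pos hmem]; simp [hmem]
  · rw [if_neg hmem]
    constructor
    · intro h; exact absurd h.symm (add_one_ne hn _)
    · intro h; exact absurd h hmem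
lemma homArc_up (hn : 3 ≤ n) {fC : ZMod m → Orient} {fD : ZMod n → Orient}
    {Φ φ' : ZMod m → ZMod n} (i : ZMod n)
    (hΦ : IsHom (cycRel fC) (cycRel fD) Φ)
    (hstep : ∀ c, Φ (c + 1) = Φ c + 1 ∨ Φ (c + 1) = Φ c)
    (hfwd : (fD i).fwd)
    (hK1 : ∀ c, φ' c = Φ c ∨ (φ' c = i + 1 ∧ Φ c = i))
    (hK3 : ∀ c, φ' (c + 1) ≠ Φ (c + 1) → Φ c = i) :
    HomArc (cycRel fC) (cycRel fD) Φ φ' := by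
  have hne : i + 1 ≠ i := add_one_ne hn i
  rintro u v (rfl | ⟨rfl, hf⟩ | ⟨rfl, hf⟩)
  · rcases hK1 u with h | ⟨h1, h2⟩
    · rw [h]; exact Or.inl rfl
    · rw [h1, h2]; exact Or.inr (Or.inl ⟨rfl, hfwd⟩)
  · rcases hK1 (u + 1) with h | ⟨h1, h2⟩
    · rw [h]; exact hΦ u (u + 1) (Or.inr (Or.inl ⟨rfl, hf⟩))
    · have hΦu : Φ u = i := hK3 u (by rw [h1, h2]; exact hne)
      rw [h1, hΦu]; exact Or.inr (Or.inl ⟨rfl, hfwd⟩)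
  · rcases hK1 v with h | ⟨h1, h2⟩
    · rw [h]; exact hΦ (v + 1) v (Or.inr (Or.inr ⟨rfl, hf⟩))
    · rw [h1]
      rcases hstep v with h3 | h3
      · rw [h3, h2]; exact Or.inl rfl
      · rw [h3, h2]; exact Or.inr (Or.inl ⟨rfl, hfwd⟩)

lemma homArc_down (hn : 3 ≤ n) {fC : ZMod m → Orient} {fD : ZMod n → Orient}
    {Φ φ' : ZMod m → ZMod n} (i : ZMod n)
    (hΦ : IsHom (cycRel fC) (cycRel fD) Φ)
    (hstep : ∀ c, Φ (c + 1) = Φ c + 1 ∨ Φ (c + 1) = Φ c)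
    (hbwd : (fD i).bwd)
    (hK1 : ∀ c, φ' c = Φ c ∨ (φ' c = i + 1 ∧ Φ c = i))
    (hK3 : ∀ c, φ' (c + 1) ≠ Φ (c + 1) → Φ c = i) :
    HomArc (cycRel fC) (cycRel fD) φ' Φ := by
  have hne : i + 1 ≠ i := add_one_ne hn i
  rintro u v (rfl | ⟨rfl, hf⟩ | ⟨rfl, hf⟩)
  · rcases hK1 u with h | ⟨h1, h2⟩
    · rw [h]; exact Or.inl rfl
    · rw [h1, h2]; exact Or.inr (Or.inr ⟨rfl, hbwd⟩)
  · rcases hK1 u with h | ⟨h1, h2⟩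
    · rw [h]; exact hΦ u (u + 1) (Or.inr (Or.inl ⟨rfl, hf⟩))
    · rw [h1]
      rcases hstep u with h3 | h3
      · rw [h3, h2]; exact Or.inl rfl
      · rw [h3, h2]; exact Or.inr (Or.inr ⟨rfl, hbwd⟩)
  · rcases hK1 (v + 1) with h | ⟨h1, h2⟩
    · rw [h]; exact hΦ (v + 1) v (Or.inr (Or.inr ⟨rfl, hf⟩))
    · have hΦv : Φ v = i := hK3 v (by rw [h1, h2]; exact hne)
      rw [h1, hΦv]; exact Or.inr (Or.inr ⟨rfl, hbwd⟩)
end Aux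

/-- for the maximum element `Φ_i^M` of `Mon_1(C,D;i)` (maximum in the
order `φ ≥ φ'` iff the selection function of `φ` is pointwise at most that of `φ'`,
equivalently `φ` has at least as many increasing edges among every initial segment),
there is a monotone one-step up edge from `Φ_i^M` to some map of `Mon_1(C,D;i+1)`
iff `σ^i(D) y_{i+1} ≤* C`. -/
theorem max_element_one_step_up_iff (m n : ℕ) (hm : 3 ≤ m)
    (fC : ZMod m → Orient) (fD : ZMod n → Orient) (hD : NonContractible fD)
    (i : ZMod n) (hsub : StarSub (shiftPowStr fD 1 i) (cycStr fC))
    (Φ : ZMod m → ZMod n) (hΦ : Φ ∈ Mon1 fC fD i)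
    (hmax : ∀ φ ∈ Mon1 fC fD i, ∀ j : ℕ, j ≤ m → incBefore φ j ≤ incBefore Φ j) :
    (∃ φ' ∈ Mon1 fC fD (i + 1), OneStepUp (cycRel fC) (cycRel fD) Φ φ') ↔
      StarSub (shiftPowExtStr fD 1 i) (cycStr fC) := by
  haveI : NeZero m := ⟨by omega⟩
  have hn : 3 ≤ n := by rcases hD with h | ⟨h, _⟩ <;> omega
  haveI : NeZero n := ⟨by omega⟩
  obtain ⟨hΦhom, hΦmon, hΦinc, hΦ0⟩ := hΦ
  have hΦIncMap : IncMap Φ := incMap_of hm hn Φ hΦmon hΦinc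
  have hstep := hΦIncMap.1
  set S : Finset ℕ := (Finset.range m).filter
    (fun t => Φ (((t : ℕ) : ZMod m) + 1) = Φ ((t : ℕ) : ZMod m) + 1) with hSdef
  have hSm : ∀ s ∈ S, s < m := by
    intro s hs
    rw [hSdef] at hs
    exact Finset.mem_range.mp (Finset.mem_filter.mp hs).1
  have hSchar : ∀ j, j < m →
      (Φ (((j : ℕ) : ZMod m) + 1) = Φ ((j : ℕ) : ZMod m) + 1 ↔ j ∈ S) := by
    intro j hj
    rw [hSdef, Finset.mem_filter, Finset.mem_range]
    exact ⟨fun h => ⟨hj, h⟩, fun h => h.2⟩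
  have hIncBS : ∀ j, j ≤ m → incBefore Φ j = (S.filter (· < j)).card :=
    fun j hj => incBefore_eq_of_char hSchar hj
  have hScard : S.card = n := by
    have h1 := increase_eq hn Φ hstep
    rw [hΦinc] at h1
    have h2 := hIncBS m le_rfl
    have h3 : S.filter (· < m) = S := by
      ext x; simp only [Finset.mem_filter]
      exact ⟨fun h => h.1, fun h => ⟨h, hSm x h⟩⟩
    rw [h3] at h2
    omega
  have hΦcast : ∀ c : ZMod m,
      Φ c = i + (((S.filter (· < c.val)).card : ℕ) : ZMod n) := by
    intro c
    have h1 := phi_cast hn Φ hstep c.val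
    rw [zmod_cast_val] at h1
    rw [h1, hΦ0, hIncBS c.val (le_of_lt (ZMod.val_lt c))]
  have hΦedge : ∀ c : ZMod m, (Φ (c + 1) = Φ c + 1 ↔ c.val ∈ S) := by
    intro c
    have h1 := hSchar c.val (ZMod.val_lt c)
    rwa [zmod_cast_val] at h1
  have hmatchΦ : ∀ c : ZMod m, Φ (c + 1) = Φ c + 1 →
      fD (Φ c) = fC c ∨ fD (Φ c) = Orient.star :=
    fun c h => hom_match hn hΦhom h
  have hSne : S.Nonempty := by
    rw [← Finset.card_pos, hScard]; omega
  constructor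
  · rintro ⟨φ', ⟨hφ'hom, hφ'mon, hφ'inc, hφ'0⟩, hHE, a, k, d, hk, hconst, hdef⟩
    have hφ'IncMap : IncMap φ' := incMap_of hm hn φ' hφ'mon hφ'inc
    have hstep' := hφ'IncMap.1
    -- 0 is in the block
    have hblk0 : ∃ j : ℕ, j ≤ k ∧ (0 : ZMod m) = a + ((j : ℕ) : ZMod m) := by
      by_contra hc
      have h1 := hdef 0
      rw [if_neg hc, hΦ0, hφ'0] at h1
      exact add_one_ne hn i h1
    have hd : i = d := by
      have h1 := hdef 0
      rw [if_pos hblk0, hφ'0] at h1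
      exact add_right_cancel h1
    subst hd
    -- a - 1 is not in the block
    have hnotall : ¬ (∃ j : ℕ, j ≤ k ∧ a - 1 = a + ((j : ℕ) : ZMod m)) := by
      rintro ⟨j, hjk, hj⟩
      have hm1 : ((m - 1 : ℕ) : ZMod m) = -1 := by
        have h1 : ((m - 1 : ℕ) : ZMod m) + 1 = 0 := by
          rw [show ((m - 1 : ℕ) : ZMod m) + 1 = ((m - 1 + 1 : ℕ) : ZMod m) by push_cast; ring,
            (by omega : m - 1 + 1 = m), ZMod.natCast_self]
        linear_combination h1
      have hj2 : ((j : ℕ) : ZMod m) = ((m - 1 : ℕ) : ZMod m) := by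
        rw [hm1]; linear_combination -hj
      have hjm : j = m - 1 := (zmod_cast_eq_iff (by omega) (by omega)).mp hj2
      have hall : ∀ c : ZMod m, Φ c = i := by
        intro c
        have hv := ZMod.val_lt (c - a)
        have h2 := hconst (c - a).val (by omega)
        rwa [zmod_cast_val, add_sub_cancel] at h2
      obtain ⟨s, hs⟩ := hSne
      have hinc2 := (hSchar s (hSm s hs)).mpr hs
      rw [hall, hall] at hinc2
      exact add_one_ne hn i hinc2.symm
    have hblka : ∃ j : ℕ, j ≤ k ∧ a = a + ((j : ℕ) : ZMod m) := ⟨0, by omega, by simp⟩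
    have hφ'a : φ' a = i + 1 := by rw [hdef a, if_pos hblka]
    have hφ'am : φ' (a - 1) = Φ (a - 1) := by rw [hdef (a - 1), if_neg hnotall]
    have hΦa : Φ a = i := by
      have h1 := hconst 0 (by omega)
      simpa using h1
    have hΦam : Φ (a - 1) = i := by
      have h1 := hstep' (a - 1)
      rw [sub_add_cancel, hφ'a, hφ'am] at h1
      have h2 := hstep (a - 1)
      rw [sub_add_cancel, hΦa] at h2
      rcases h1 with h1 | h1
      · exact (add_right_cancel h1.symm)
      · rcases h2 with h2 | h2
        · exfalso
          rw [← h1] at h2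
          exact add_two_ne hn i h2.symm
        · exfalso
          rw [← h2] at h1
          exact add_one_ne hn i h1
    have hinc' : φ' ((a - 1) + 1) = φ' (a - 1) + 1 := by
      rw [sub_add_cancel, hφ'a, hφ'am, hΦam]
    have hmatch' := hom_match hn hφ'hom hinc'
    rw [hφ'am, hΦam] at hmatch'
    set p := (a - 1).val with hpdef
    have hpm : p < m := ZMod.val_lt _
    have hcastp : ((p : ℕ) : ZMod m) = a - 1 := zmod_cast_val _
    have hpS : p ∉ S := by
      intro hmem
      have h1 := (hΦedge (a - 1)).mpr hmem
      rw [sub_add_cancel, hΦa, hΦam] at h1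
      exact add_one_ne hn i h1.symm
    have hcnt : (S.filter (· < p)).card = 0 ∨ (S.filter (· < p)).card = n := by
      have h1 := hΦcast (a - 1)
      rw [hΦam] at h1
      have h2 : (((S.filter (· < p)).card : ℕ) : ZMod n) = 0 := by
        linear_combination -h1
      have hle : (S.filter (· < p)).card ≤ n := by
        rw [← hScard]; exact Finset.card_filter_le _ _
      rcases eq_or_lt_of_le hle with h | h
      · exact Or.inr h
      · left
        refine (zmod_cast_eq_iff h (by omega)).mp ?_
        rw [h2]; norm_cast
    rcases hcnt with hcnt | hcnt
    · exfalso
      set s0 := S.min' hSne with hs0def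
      have hs0S : s0 ∈ S := Finset.min'_mem _ _
      have hs0m : s0 < m := hSm _ hs0S
      have hps0 : p < s0 := by
        have hps : p ≤ s0 := by
          by_contra hc
          push_neg at hc
          have h1 : s0 ∈ S.filter (· < p) := Finset.mem_filter.mpr ⟨hs0S, hc⟩
          rw [Finset.card_eq_zero] at hcnt
          rw [hcnt] at h1
          exact absurd h1 (Finset.notMem_empty _)
        rcases eq_or_lt_of_le hps with h | h
        · exact absurd (h ▸ hs0S) hpS
        · exact h
      have hΦs0 : Φ ((s0 : ℕ) : ZMod m) = i := by
        rw [hΦcast, ZMod.val_cast_of_lt hs0m]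
        have h1 : S.filter (· < s0) = ∅ := by
          ext x
          simp only [Finset.mem_filter, Finset.notMem_empty, iff_false, not_and]
          intro hx hlt
          exact absurd (Finset.min'_le S x hx) (by omega)
        rw [h1]
        simp
      have hΦs1 : Φ (((s0 : ℕ) : ZMod m) + 1) = i + 1 := by
        rw [(hSchar s0 hs0m).mpr hs0S, hΦs0]
      have hs01 : s0 + 1 < m := by
        by_contra hc
        have h1 : s0 + 1 = m := by omega
        have h0 : ((s0 : ℕ) : ZMod m) + 1 = 0 := by
          rw [show ((s0 : ℕ) : ZMod m) + 1 = ((s0 + 1 : ℕ) : ZMod m) by push_cast; ring,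
            h1, ZMod.natCast_self]
        rw [h0, hΦ0] at hΦs1
        exact add_one_ne hn i hΦs1.symm
      have ha : a = ((p + 1 : ℕ) : ZMod m) := by
        rw [show ((p + 1 : ℕ) : ZMod m) = ((p : ℕ) : ZMod m) + 1 by push_cast; ring, hcastp]
        ring
      have hjk : s0 - p ≤ k := by
        obtain ⟨j0, hj0k, hj0⟩ := hblk0
        have hcast0 : ((p + 1 + j0 : ℕ) : ZMod m) = 0 := by
          rw [show ((p + 1 + j0 : ℕ) : ZMod m) = ((p + 1 : ℕ) : ZMod m) + ((j0 : ℕ) : ZMod m)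
            by push_cast; ring, ← ha, ← hj0]
        have hdvd : m ∣ p + 1 + j0 := by
          rwa [ZMod.natCast_eq_zero_iff] at hcast0
        obtain ⟨c, hc⟩ := hdvd
        have hc1 : p + 1 + j0 = m := by
          rcases c with _ | c
          · rw [Nat.mul_zero] at hc; omega
          · rcases c with _ | c
            · rw [Nat.mul_one] at hc; omega
            · exfalso
              have h2 : m * 2 ≤ m * (c + 1 + 1) := Nat.mul_le_mul_left m (by omega)
              omega
        omega
      have heq' : ((s0 + 1 : ℕ) : ZMod m) = a + ((s0 - p : ℕ) : ZMod m) := by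
        rw [ha, show ((p + 1 : ℕ) : ZMod m) + ((s0 - p : ℕ) : ZMod m)
          = ((p + 1 + (s0 - p) : ℕ) : ZMod m) by push_cast; ring,
          (by omega : p + 1 + (s0 - p) = s0 + 1)]
      have hΦblk : Φ (((s0 + 1 : ℕ) : ZMod m)) = i := by
        rw [heq']
        exact hconst (s0 - p) hjk
      rw [show ((s0 + 1 : ℕ) : ZMod m) = ((s0 : ℕ) : ZMod m) + 1 by push_cast; ring,
        hΦs1] at hΦblk
      exact add_one_ne hn i hΦblk
    · -- the good case : every increasing edge of Φ is before p
      have hallS : ∀ s ∈ S, s < p := by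
        intro s hs
        have hsub2 : S.filter (· < p) = S :=
          Finset.eq_of_subset_of_card_le (Finset.filter_subset _ _) (by rw [hcnt, hScard])
        rw [← hsub2] at hs
        exact (Finset.mem_filter.mp hs).2
      set e := S.orderEmbOfFin hScard with hedef
      have hemem : ∀ t : Fin n, (e t : ℕ) ∈ S := fun t => Finset.orderEmbOfFin_mem S hScard t
      have hecount : ∀ t : Fin n, (S.filter (· < e t)).card = t.val := by
        intro t
        have himg : S = (Finset.range n).image (fun x => if h : x < n then (e ⟨x, h⟩ : ℕ) else x + m) := by
          ext x
          simp only [Finset.mem_image, Finset.mem_range]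
          constructor
          · intro hx
            have hr : x ∈ Set.range (e : Fin n → ℕ) := by
              rw [Finset.range_orderEmbOfFin]; exact hx
            obtain ⟨t', ht'⟩ := hr
            exact ⟨t'.val, t'.isLt, by rw [dif_pos t'.isLt, Fin.eta]; exact ht'⟩
          · rintro ⟨t', ht', rfl⟩
            rw [dif_pos ht']
            exact hemem _
        have hgmono : ∀ t1 t2 : ℕ, t1 < t2 → t2 < n →
            (if h : t1 < n then (e ⟨t1, h⟩ : ℕ) else t1 + m) <
            (if h : t2 < n then (e ⟨t2, h⟩ : ℕ) else t2 + m) := by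
          intro t1 t2 h12 h2
          rw [dif_pos (by omega : t1 < n), dif_pos h2]
          exact e.strictMono (Fin.mk_lt_mk.mpr h12)
        have h1 := count_filter_lt_image hgmono t.isLt
        rw [← himg] at h1
        rw [← h1]
        congr 1
        rw [dif_pos t.isLt, Fin.eta]
      refine ⟨fun t : Fin (1 * n + 1) =>
        if h : (t : ℕ) < n then ⟨e ⟨t, h⟩, hSm _ (hemem _)⟩ else ⟨p, hpm⟩, ?_, ?_⟩
      · intro t1 t2 hlt
        dsimp only
        have hlt' : (t1 : ℕ) < (t2 : ℕ) := hlt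
        by_cases h1 : (t1 : ℕ) < n
        · by_cases h2 : (t2 : ℕ) < n
          · rw [dif_pos h1, dif_pos h2]
            exact Fin.mk_lt_mk.mpr (e.strictMono (Fin.mk_lt_mk.mpr hlt'))
          · rw [dif_pos h1, dif_neg h2]
            exact Fin.mk_lt_mk.mpr (hallS _ (hemem _))
        · exfalso
          have := t2.isLt
          omega
      · intro t
        dsimp only
        by_cases h : (t : ℕ) < n
        · rw [dif_pos h]
          have hΦe : Φ (((e ⟨(t : ℕ), h⟩ : ℕ) : ZMod m)) = i + (((t : ℕ) : ℕ) : ZMod n) := by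
            rw [hΦcast, ZMod.val_cast_of_lt (hSm _ (hemem _))]
            rw [hecount ⟨(t : ℕ), h⟩]
          have hedge2 : Φ ((((e ⟨(t : ℕ), h⟩ : ℕ) : ℕ) : ZMod m) + 1)
              = Φ (((e ⟨(t : ℕ), h⟩ : ℕ) : ZMod m)) + 1 := by
            have := hSchar _ (hSm _ (hemem ⟨(t : ℕ), h⟩))
            exact this.mpr (hemem _)
          have h2 := hmatchΦ _ hedge2
          rw [hΦe] at h2
          exact h2
        · rw [dif_neg h]
          have ht : (t : ℕ) = n := by
            have := t.isLt
            omega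
          have hts : shiftPowExtStr fD 1 i t = fD i := by
            show fD (i + (((t : ℕ) : ℕ) : ZMod n)) = fD i
            rw [ht, ZMod.natCast_self, add_zero]
          have hcy : cycStr fC ⟨p, hpm⟩ = fC (a - 1) := by
            show fC ((p : ℕ) : ZMod m) = fC (a - 1)
            rw [hcastp]
          rw [hts, hcy]
          exact hmatch'

  · rintro ⟨β, hβmono, hβmatch⟩
    set g : ℕ → ℕ := fun t => if h : t < 1 * n + 1 then (β ⟨t, h⟩ : ℕ) else t + m with hgdef
    have hgmono : ∀ t1 t2, t1 < t2 → t2 < n + 1 → g t1 < g t2 := by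
      intro t1 t2 h12 h2
      have h1' : t1 < 1 * n + 1 := by omega
      have h2' : t2 < 1 * n + 1 := by omega
      rw [hgdef]
      dsimp only
      rw [dif_pos h1', dif_pos h2']
      exact hβmono (Fin.mk_lt_mk.mpr h12)
    have hgm : ∀ t, t < n + 1 → g t < m := by
      intro t ht
      have h' : t < 1 * n + 1 := by omega
      rw [hgdef]
      dsimp only
      rw [dif_pos h']
      exact (β ⟨t, h'⟩).isLt
    set Sb : Finset ℕ := (Finset.range n).image g with hSbdef
    have hSbm : ∀ x ∈ Sb, x < m := by
      intro x hx
      rw [hSbdef] at hx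
      obtain ⟨t, ht, rfl⟩ := Finset.mem_image.mp hx
      have := Finset.mem_range.mp ht
      exact hgm t (by omega)
    have hSbmem : ∀ t, t < n → g t ∈ Sb := by
      intro t ht
      rw [hSbdef]
      exact Finset.mem_image.mpr ⟨t, Finset.mem_range.mpr ht, rfl⟩
    have hSbcard : Sb.card = n := by
      rw [hSbdef, Finset.card_image_of_injOn, Finset.card_range]
      intro t1 h1 t2 h2 he
      simp only [Finset.coe_range, Set.mem_Iio] at h1 h2
      by_contra hne
      rcases Nat.lt_or_ge t1 t2 with h | h
      · exact absurd (hgmono t1 t2 h (by omega)) (by omega)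
      · rcases eq_or_lt_of_le h with h' | h'
        · exact hne h'.symm
        · exact absurd (hgmono t2 t1 h' (by omega)) (by omega)
    have hβstep : ∀ c : ZMod m,
        cMap i Sb (c + 1) = cMap i Sb c + 1 ∨ cMap i Sb (c + 1) = cMap i Sb c :=
      fun c => cMap_step hn hSbm hSbcard i c
    have hβinciff : ∀ c : ZMod m, cMap i Sb (c + 1) = cMap i Sb c + 1 ↔ c.val ∈ Sb :=
      fun c => cMap_inc_iff hn hSbm hSbcard i c
    have hβcount : ∀ t, t < n → (Sb.filter (· < g t)).card = t := by
      intro t ht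
      rw [hSbdef]
      exact count_filter_lt_image (fun a b hab hb => hgmono a b hab (by omega)) ht
    have hβmatchC : ∀ c : ZMod m, cMap i Sb (c + 1) = cMap i Sb c + 1 →
        fD (cMap i Sb c) = fC c ∨ fD (cMap i Sb c) = Orient.star := by
      intro c hc
      obtain ⟨t, ht, hgt⟩ : ∃ t, t < n ∧ g t = c.val := by
        have h1 := (hβinciff c).mp hc
        rw [hSbdef] at h1
        obtain ⟨t, ht, h⟩ := Finset.mem_image.mp h1
        exact ⟨t, Finset.mem_range.mp ht, h⟩
      have hφβc : cMap i Sb c = i + ((t : ℕ) : ZMod n) := by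
        unfold cMap
        rw [← hgt, hβcount t ht]
      have ht' : t < 1 * n + 1 := by omega
      have hmt := hβmatch ⟨t, ht'⟩
      have h2 : shiftPowExtStr fD 1 i ⟨t, ht'⟩ = fD (cMap i Sb c) := by
        show fD (i + ((t : ℕ) : ZMod n)) = _
        rw [hφβc]
      have h3 : cycStr fC (β ⟨t, ht'⟩) = fC c := by
        show fC (((β ⟨t, ht'⟩ : ℕ) : ℕ) : ZMod m) = fC c
        have h4 : (β ⟨t, ht'⟩ : ℕ) = g t := by
          rw [hgdef]; dsimp only; rw [dif_pos ht']
        rw [h4, hgt, zmod_cast_val]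
      rw [h2, h3] at hmt
      exact hmt
    have hcharb : ∀ j, j < m →
        (cMap i Sb (((j : ℕ) : ZMod m) + 1) = cMap i Sb ((j : ℕ) : ZMod m) + 1 ↔ j ∈ Sb) := by
      intro j hj
      have h1 := hβinciff ((j : ℕ) : ZMod m)
      rwa [ZMod.val_cast_of_lt hj] at h1
    have hφβMon1 : cMap i Sb ∈ Mon1 fC fD i := by
      refine ⟨hom_of_matches hβstep hβmatchC, Or.inl ⟨hβstep, ?_⟩, ?_, cMap_zero i Sb⟩
      · refine ⟨((g 0 : ℕ) : ZMod m), ?_⟩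
        rw [hβinciff, ZMod.val_cast_of_lt (hgm 0 (by omega))]
        exact hSbmem 0 (by omega)
      · rw [increase_eq hn _ hβstep, incBefore_eq_of_char hcharb le_rfl]
        have h2 : Sb.filter (· < m) = Sb := by
          ext x
          simp only [Finset.mem_filter]
          exact ⟨fun h => h.1, fun h => ⟨h, hSbm x h⟩⟩
        rw [h2, hSbcard]
    have hq := hmax _ hφβMon1 (g (n - 1) + 1) (by have := hgm (n - 1) (by omega); omega)
    have hL : incBefore (cMap i Sb : ZMod m → ZMod n) (g (n - 1) + 1) = n := by
      rw [incBefore_eq_of_char hcharb (by have := hgm (n - 1) (by omega); omega)]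
      have h2 : Sb.filter (· < g (n - 1) + 1) = Sb := by
        ext x
        simp only [Finset.mem_filter]
        refine ⟨fun h => h.1, fun hx => ⟨hx, ?_⟩⟩
        rw [hSbdef] at hx
        obtain ⟨t, ht, rfl⟩ := Finset.mem_image.mp hx
        have ht2 := Finset.mem_range.mp ht
        rcases eq_or_lt_of_le (show t ≤ n - 1 by omega) with h | h
        · rw [h]; omega
        · have := hgmono t (n - 1) h (by omega); omega
      rw [h2, hSbcard]
    have hpn : n < 1 * n + 1 := by omega
    set p := g n with hpdef2
    have hpm2 : p < m := hgm n (by omega)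
    have hgnn : g (n - 1) < p := hgmono (n - 1) n (by omega) (by omega)
    have hallS : ∀ s ∈ S, s < p := by
      intro s hs
      have hUn : incBefore Φ (g (n - 1) + 1) = (S.filter (· < g (n - 1) + 1)).card :=
        hIncBS _ (by have := hgm (n - 1) (by omega); omega)
      have hle : (S.filter (· < g (n - 1) + 1)).card ≤ n := by
        rw [← hScard]; exact Finset.card_filter_le _ _
      have hE : (S.filter (· < g (n - 1) + 1)).card = n := by
        have hq2 := hq
        rw [hL, hUn] at hq2
        omega
      have hsub2 : S.filter (· < g (n - 1) + 1) = S :=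
        Finset.eq_of_subset_of_card_le (Finset.filter_subset _ _) (by rw [hE, hScard])
      rw [← hsub2] at hs
      have := (Finset.mem_filter.mp hs).2
      omega
    have hmatchp : fD i = fC ((p : ℕ) : ZMod m) ∨ fD i = Orient.star := by
      have hmt := hβmatch ⟨n, hpn⟩
      have h2 : shiftPowExtStr fD 1 i ⟨n, hpn⟩ = fD i := by
        show fD (i + ((n : ℕ) : ZMod n)) = fD i
        rw [ZMod.natCast_self, add_zero]
      have h3 : cycStr fC (β ⟨n, hpn⟩) = fC ((p : ℕ) : ZMod m) := by
        show fC (((β ⟨n, hpn⟩ : ℕ) : ℕ) : ZMod m) = _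
        have h4 : (β ⟨n, hpn⟩ : ℕ) = g n := by
          rw [hgdef]; dsimp only; rw [dif_pos hpn]
        rw [h4]
      rw [h2, h3] at hmt
      exact hmt
    set s0 := S.min' hSne with hs0def
    have hs0S : s0 ∈ S := Finset.min'_mem _ _
    have hs0m : s0 < m := hSm _ hs0S
    have hs0p : s0 < p := hallS _ hs0S
    set φ' : ZMod m → ZMod n := fun c => if p < c.val ∨ c.val ≤ s0 then i + 1 else Φ c
      with hφ'def
    have hφ'B : ∀ c : ZMod m, (p < c.val ∨ c.val ≤ s0) → φ' c = i + 1 := by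
      intro c hc
      show (if p < c.val ∨ c.val ≤ s0 then i + 1 else Φ c) = i + 1
      exact if_pos hc
    have hφ'NB : ∀ c : ZMod m, ¬(p < c.val ∨ c.val ≤ s0) → φ' c = Φ c := by
      intro c hc
      show (if p < c.val ∨ c.val ≤ s0 then i + 1 else Φ c) = Φ c
      exact if_neg hc
    have hSfull : S.filter (· < p) = S := by
      ext x
      simp only [Finset.mem_filter]
      exact ⟨fun h => h.1, fun hx => ⟨hx, hallS x hx⟩⟩
    have hΦB : ∀ c : ZMod m, (p < c.val ∨ c.val ≤ s0) → Φ c = i := by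
      intro c hc
      rw [hΦcast c]
      rcases hc with hc | hc
      · have h1 : S.filter (· < c.val) = S := by
          ext x
          simp only [Finset.mem_filter]
          exact ⟨fun h => h.1, fun hx => ⟨hx, by have := hallS x hx; omega⟩⟩
        rw [h1, hScard, ZMod.natCast_self, add_zero]
      · have h1 : S.filter (· < c.val) = ∅ := by
          ext x
          simp only [Finset.mem_filter, Finset.notMem_empty, iff_false, not_and]
          intro hx hlt
          have := Finset.min'_le S x hx
          omega
        rw [h1]
        simp
    have hΦp : Φ ((p : ℕ) : ZMod m) = i := by
      rw [hΦcast, ZMod.val_cast_of_lt hpm2, hSfull, hScard, ZMod.natCast_self, add_zero]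
    have hΦs0 : Φ ((s0 : ℕ) : ZMod m) = i :=
      hΦB _ (Or.inr (le_of_eq (ZMod.val_cast_of_lt hs0m)))
    have hΦs1 : Φ (((s0 : ℕ) : ZMod m) + 1) = i + 1 := by
      rw [(hSchar s0 hs0m).mpr hs0S, hΦs0]
    have hvsucc : ∀ c : ZMod m, c.val + 1 < m → (c + 1).val = c.val + 1 := by
      intro c hc
      rw [show c + 1 = ((c.val + 1 : ℕ) : ZMod m) by
        rw [show ((c.val + 1 : ℕ) : ZMod m) = ((c.val : ℕ) : ZMod m) + 1 by push_cast; ring,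
          zmod_cast_val], ZMod.val_cast_of_lt hc]
    have hvsucc0 : ∀ c : ZMod m, c.val + 1 = m → c + 1 = 0 := by
      intro c hc
      rw [show c + 1 = ((c.val + 1 : ℕ) : ZMod m) by
        rw [show ((c.val + 1 : ℕ) : ZMod m) = ((c.val : ℕ) : ZMod m) + 1 by push_cast; ring,
          zmod_cast_val], hc, ZMod.natCast_self]
    have hK1 : ∀ c : ZMod m, φ' c = Φ c ∨ (φ' c = i + 1 ∧ Φ c = i) := by
      intro c
      by_cases hc : p < c.val ∨ c.val ≤ s0
      · exact Or.inr ⟨hφ'B c hc, hΦB c hc⟩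
      · exact Or.inl (hφ'NB c hc)
    have hBsucc : ∀ c : ZMod m, ¬(p < c.val ∨ c.val ≤ s0) →
        (p < (c + 1).val ∨ (c + 1).val ≤ s0) → c.val = p := by
      intro c hc hc1
      push_neg at hc
      have hv := ZMod.val_lt c
      by_cases hvm : c.val + 1 = m
      · have h0 : (c + 1).val = 0 := by rw [hvsucc0 c hvm, ZMod.val_zero]
        omega
      · have h0 : (c + 1).val = c.val + 1 := hvsucc c (by omega)
        omega
    have hK3 : ∀ c : ZMod m, φ' (c + 1) ≠ Φ (c + 1) → Φ c = i := by
      intro c hne'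
      have hB1 : p < (c + 1).val ∨ (c + 1).val ≤ s0 := by
        by_contra hcb
        exact hne' (hφ'NB _ hcb)
      by_cases hc : p < c.val ∨ c.val ≤ s0
      · exact hΦB c hc
      · have h1 := hBsucc c hc hB1
        rw [← zmod_cast_val c, h1]
        exact hΦp
    have hmemNB : ∀ c : ZMod m, c.val ∈ insert p (S.erase s0) →
        ¬(p < c.val ∨ c.val ≤ s0) := by
      intro c hcmem
      rcases Finset.mem_insert.mp hcmem with h | h
      · rw [h]; omega
      · have hxS := Finset.mem_of_mem_erase h
        have hxne := Finset.ne_of_mem_erase h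
        have h1 := hallS _ hxS
        have h2 := Finset.min'_le S _ hxS
        omega
    have hedge' : ∀ c : ZMod m,
        (φ' (c + 1) = φ' c + 1 ∧ c.val ∈ insert p (S.erase s0) ∧
          (fD (φ' c) = fC c ∨ fD (φ' c) = Orient.star)) ∨
        (φ' (c + 1) = φ' c ∧ c.val ∉ insert p (S.erase s0)) := by
      intro c
      have hv := ZMod.val_lt c
      by_cases hc : p < c.val ∨ c.val ≤ s0
      · right
        refine ⟨?_, fun hmem => hmemNB c hmem hc⟩
        by_cases hc1 : p < (c + 1).val ∨ (c + 1).val ≤ s0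
        · rw [hφ'B _ hc, hφ'B _ hc1]
        · have hc1' := hc1
          push_neg at hc1'
          have hc1m : (c + 1).val ≠ 0 := by omega
          have hvm : c.val + 1 < m := by
            by_contra hcc
            have h5 := hvsucc0 c (by omega)
            rw [h5, ZMod.val_zero] at hc1m
            exact hc1m rfl
          have hsv : (c + 1).val = c.val + 1 := hvsucc c hvm
          have hcs0 : c.val = s0 := by omega
          have hceq : c = ((s0 : ℕ) : ZMod m) := by rw [← zmod_cast_val c, hcs0]
          rw [hφ'NB _ hc1, hφ'B _ hc, hceq, hΦs1]
      · by_cases hc1 : p < (c + 1).val ∨ (c + 1).val ≤ s0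
        · left
          have hcp : c.val = p := hBsucc c hc hc1
          have hceq : c = ((p : ℕ) : ZMod m) := by rw [← zmod_cast_val c, hcp]
          have hφ'c : φ' c = i := by rw [hφ'NB _ hc, hceq, hΦp]
          refine ⟨?_, Finset.mem_insert.mpr (Or.inl hcp), ?_⟩
          · rw [hφ'B _ hc1, hφ'c]
          · rw [hφ'c, hceq]
            exact hmatchp
        · have he1 : φ' c = Φ c := hφ'NB _ hc
          have he2 : φ' (c + 1) = Φ (c + 1) := hφ'NB _ hc1
          push_neg at hc
          by_cases hmem : c.val ∈ S
          · left
            refine ⟨?_, ?_, ?_⟩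
            · rw [he1, he2]
              exact (hΦedge c).mpr hmem
            · refine Finset.mem_insert.mpr (Or.inr (Finset.mem_erase.mpr ⟨?_, hmem⟩))
              have := Finset.min'_le S _ hmem
              omega
            · rw [he1]
              exact hmatchΦ c ((hΦedge c).mpr hmem)
          · right
            refine ⟨?_, ?_⟩
            · rw [he1, he2]
              rcases hstep c with h | h
              · exact absurd ((hΦedge c).mp h) hmem
              · exact h
            · intro hcm
              rcases Finset.mem_insert.mp hcm with h | h
              · push_neg at hc1
                by_cases hvm : c.val + 1 = m
                · have h5 := hvsucc0 c hvm
                  rw [h5, ZMod.val_zero] at hc1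
                  omega
                · have h5 := hvsucc c (by omega)
                  omega
              · exact hmem (Finset.mem_of_mem_erase h)
    have hstep2 : ∀ c : ZMod m, φ' (c + 1) = φ' c + 1 ∨ φ' (c + 1) = φ' c := by
      intro c
      rcases hedge' c with h | h
      · exact Or.inl h.1
      · exact Or.inr h.1
    have hmatch2 : ∀ c : ZMod m, φ' (c + 1) = φ' c + 1 →
        fD (φ' c) = fC c ∨ fD (φ' c) = Orient.star := by
      intro c hcinc
      rcases hedge' c with h | h
      · exact h.2.2
      · exfalso
        rw [h.1] at hcinc
        exact add_one_ne hn _ hcinc.symm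
    have hchar2 : ∀ j, j < m →
        (φ' (((j : ℕ) : ZMod m) + 1) = φ' ((j : ℕ) : ZMod m) + 1 ↔
          j ∈ insert p (S.erase s0)) := by
      intro j hj
      have hv : (((j : ℕ) : ZMod m)).val = j := ZMod.val_cast_of_lt hj
      constructor
      · intro hinc
        rcases hedge' ((j : ℕ) : ZMod m) with h | h
        · rw [← hv]; exact h.2.1
        · exfalso
          rw [h.1] at hinc
          exact add_one_ne hn _ hinc.symm
      · intro hmem
        rcases hedge' ((j : ℕ) : ZMod m) with h | h
        · exact h.1
        · exact absurd (by rw [hv]; exact hmem) h.2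
    have hT : (insert p (S.erase s0)).card = n := by
      rw [Finset.card_insert_of_notMem, Finset.card_erase_of_mem hs0S, hScard]
      · omega
      · intro hmem
        have := hallS _ (Finset.mem_of_mem_erase hmem)
        omega
    have hTm : ∀ x ∈ insert p (S.erase s0), x < m := by
      intro x hx
      rcases Finset.mem_insert.mp hx with h | h
      · omega
      · exact hSm _ (Finset.mem_of_mem_erase h)
    have hφ'0 : φ' 0 = i + 1 := hφ'B 0 (Or.inr (by rw [ZMod.val_zero]; omega))
    have hφ'Mon : φ' ∈ Mon1 fC fD (i + 1) := by
      refine ⟨hom_of_matches hstep2 hmatch2, Or.inl ⟨hstep2, ?_⟩, ?_, hφ'0⟩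
      · exact ⟨((p : ℕ) : ZMod m), (hchar2 p hpm2).mpr (Finset.mem_insert_self _ _)⟩
      · rw [increase_eq hn _ hstep2, incBefore_eq_of_char hchar2 le_rfl]
        have h2 : (insert p (S.erase s0)).filter (· < m) = insert p (S.erase s0) := by
          ext x
          simp only [Finset.mem_filter]
          exact ⟨fun h => h.1, fun h => ⟨h, hTm x h⟩⟩
        rw [h2, hT]
    refine ⟨φ', hφ'Mon, ?_, ((p + 1 : ℕ) : ZMod m), (m - 1 - p) + s0, i, by omega, ?_, ?_⟩
    · cases hfd : fD i with
      | plus => exact Or.inl (homArc_up hn i hΦhom hstep (by rw [hfd]; trivial) hK1 hK3)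
      | star => exact Or.inl (homArc_up hn i hΦhom hstep (by rw [hfd]; trivial) hK1 hK3)
      | minus => exact Or.inr (homArc_down hn i hΦhom hstep (by rw [hfd]; trivial) hK1 hK3)
    · intro j hj
      have hcast : ((p + 1 : ℕ) : ZMod m) + ((j : ℕ) : ZMod m) = ((p + 1 + j : ℕ) : ZMod m) := by
        push_cast; ring
      rw [hcast]
      by_cases hlt : p + 1 + j < m
      · apply hΦB
        left
        rw [ZMod.val_cast_of_lt hlt]
        omega
      · have hj2 : p + 1 + j - m ≤ s0 := by omega
        rw [show ((p + 1 + j : ℕ) : ZMod m) = ((p + 1 + j - m : ℕ) : ZMod m) by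
          conv_lhs => rw [show p + 1 + j = m + (p + 1 + j - m) by omega]
          push_cast [ZMod.natCast_self]
          ring]
        apply hΦB
        right
        rw [ZMod.val_cast_of_lt (by omega)]
        exact hj2
    · intro c
      by_cases hB : p < c.val ∨ c.val ≤ s0
      · have hex : ∃ j : ℕ, j ≤ (m - 1 - p) + s0 ∧
            c = ((p + 1 : ℕ) : ZMod m) + ((j : ℕ) : ZMod m) := by
          have hv := ZMod.val_lt c
          rcases hB with hB | hB
          · refine ⟨c.val - p - 1, by omega, ?_⟩
            rw [show ((p + 1 : ℕ) : ZMod m) + ((c.val - p - 1 : ℕ) : ZMod m)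
              = ((p + 1 + (c.val - p - 1) : ℕ) : ZMod m) by push_cast; ring,
              (by omega : p + 1 + (c.val - p - 1) = c.val), zmod_cast_val]
          · refine ⟨(m - 1 - p) + c.val, by omega, ?_⟩
            rw [show ((p + 1 : ℕ) : ZMod m) + (((m - 1 - p) + c.val : ℕ) : ZMod m)
              = ((p + 1 + ((m - 1 - p) + c.val) : ℕ) : ZMod m) by push_cast; ring,
              (by omega : p + 1 + ((m - 1 - p) + c.val) = m + c.val),
              show ((m + c.val : ℕ) : ZMod m) = ((c.val : ℕ) : ZMod m) by
                push_cast [ZMod.natCast_self]; ring,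
              zmod_cast_val]
        rw [hφ'B c hB, if_pos hex]
      · have hnex : ¬ ∃ j : ℕ, j ≤ (m - 1 - p) + s0 ∧
            c = ((p + 1 : ℕ) : ZMod m) + ((j : ℕ) : ZMod m) := by
          rintro ⟨j, hj, rfl⟩
          apply hB
          have hcast : ((p + 1 : ℕ) : ZMod m) + ((j : ℕ) : ZMod m)
              = ((p + 1 + j : ℕ) : ZMod m) := by push_cast; ring
          rw [hcast]
          by_cases hlt : p + 1 + j < m
          · left
            rw [ZMod.val_cast_of_lt hlt]
            omega
          · right
            rw [show ((p + 1 + j : ℕ) : ZMod m) = ((p + 1 + j - m : ℕ) : ZMod m) by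
              conv_lhs => rw [show p + 1 + j = m + (p + 1 + j - m) by omega]
              push_cast [ZMod.natCast_self]
              ring, ZMod.val_cast_of_lt (by omega)]
            omega
        rw [hφ'NB c hB, if_neg hnex]


end Recon
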